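/- Let L : C → D be a locally cartesian localization, where C has pullbacks and I-shaped colimits for some index category I. If I-shaped colimits are universal in C, then I-shaped colimits are universal in D. -/

import Mathlib

open CategoryTheory CategoryTheory.Limits

variable {C D : Type*} [Category C] [Category D]

/-- Given a localization `L : C ⥤ D` (left adjoint to a fully faithful inclusion
`ι : D ⥤ C`) and a cospan `ι X ⟶ ι Z ⟵ Y` in `C` whose two corners `X` and `Z`
lie in `D`, the canonical comparison map `L (X ×_Z Y) ⟶ X ×_Z (L Y)`, where the
target is the pullback in `D` of `X ⟶ Z` and the adjoint transpose `L Y ⟶ Z`. -/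
noncomputable def localizationPullbackComparison
    [HasPullbacks C] [HasPullbacks D]
    (L : C ⥤ D) (ι : D ⥤ C) [ι.Full] [ι.Faithful] (adj : L ⊣ ι)
    (X Z : D) (Y : C) (f : ι.obj X ⟶ ι.obj Z) (g : Y ⟶ ι.obj Z) :
    L.obj (pullback f g) ⟶ pullback (ι.preimage f) ((adj.homEquiv Y Z).symm g) :=
  pullback.lift (L.map (pullback.fst f g) ≫ adj.counit.app X) (L.map (pullback.snd f g))
    (by
      simp only [Category.assoc, Adjunction.homEquiv_counit]
      rw [← adj.counit_naturality (ι.preimage f)]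
      simp only [Functor.comp_map, Functor.id_obj, Functor.map_preimage]
      rw [← Functor.map_comp_assoc, ← Functor.map_comp_assoc, pullback.condition])

section Aux

variable [HasPullbacks C] [HasPullbacks D]
variable (L : C ⥤ D) (ι : D ⥤ C) [ι.Full] [ι.Faithful] (adj : L ⊣ ι)

/-- The functor `W ↦ L (ι X ×_{ι Z} W)` over `X`. -/
noncomputable def lcPhi {X Z : D} (f : X ⟶ Z) : Over (ι.obj Z) ⥤ Over X :=
  Over.pullback (ι.map f) ⋙ Over.post L ⋙ Over.map (adj.counit.app X)

/-- The functor `W ↦ X ×_Z (L W)` over `X`. -/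
noncomputable def lcPsi {X Z : D} (f : X ⟶ Z) : Over (ι.obj Z) ⥤ Over X :=
  Over.post L ⋙ Over.map (adj.counit.app Z) ⋙ Over.pullback f

/-- The comparison map `L (ι X ×_{ι Z} W) ⟶ X ×_Z (L W)`, stated in the
conventions of `Over.pullback`. -/
noncomputable def lcComp {X Z : D} (f : X ⟶ Z) (W : Over (ι.obj Z)) :
    L.obj (pullback W.hom (ι.map f)) ⟶ pullback (L.map W.hom ≫ adj.counit.app Z) f :=
  pullback.lift (L.map (pullback.fst _ _)) (L.map (pullback.snd _ _) ≫ adj.counit.app X)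
    (by
      rw [← Category.assoc, ← L.map_comp, pullback.condition, L.map_comp, Category.assoc,
        adj.counit_naturality f, Category.assoc])

theorem lcComp_eq {X Z : D} (f : X ⟶ Z) (W : Over (ι.obj Z)) :
    lcComp L ι adj f W =
      L.map (pullbackSymmetry W.hom (ι.map f)).hom ≫
        localizationPullbackComparison L ι adj X Z W.left (ι.map f) W.hom ≫
          (pullbackSymmetry _ _).hom ≫
            (pullback.congrHom (by rw [Adjunction.homEquiv_counit]) (ι.preimage_map f)).hom := by
  apply pullback.hom_ext
  · rw [lcComp, pullback.lift_fst]
    simp only [localizationPullbackComparison, pullback.congrHom, asIso_hom, Category.assoc, pullback.lift_fst,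
      Category.comp_id, pullbackSymmetry_hom_comp_fst_assoc, pullback.lift_snd, ← L.map_comp,
      pullbackSymmetry_hom_comp_snd, pullbackSymmetry_hom_comp_fst]
  · rw [lcComp, pullback.lift_snd]
    simp only [localizationPullbackComparison, pullback.congrHom, asIso_hom, Category.assoc, pullback.lift_snd,
      Category.comp_id, pullbackSymmetry_hom_comp_snd_assoc, pullback.lift_fst, ← L.map_comp_assoc,
      pullbackSymmetry_hom_comp_fst, pullbackSymmetry_hom_comp_snd]

theorem lcComp_isIso {X Z : D} (f : X ⟶ Z) (W : Over (ι.obj Z))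
    (h : IsIso (localizationPullbackComparison L ι adj X Z W.left (ι.map f) W.hom)) :
    IsIso (lcComp L ι adj f W) := by
  rw [lcComp_eq]
  infer_instance

theorem lcComp_natural {X Z : D} (f : X ⟶ Z) {W W' : Over (ι.obj Z)} (u : W ⟶ W') :
    L.map (pullback.lift (pullback.fst W.hom (ι.map f) ≫ u.left) (pullback.snd W.hom (ι.map f))
        (by rw [Category.assoc, Over.w, pullback.condition])) ≫ lcComp L ι adj f W' =
      lcComp L ι adj f W ≫ pullback.lift (pullback.fst _ f ≫ L.map u.left) (pullback.snd _ f)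
        (by rw [Category.assoc, ← L.map_comp_assoc, Over.w, pullback.condition]) := by
  apply pullback.hom_ext
  · simp only [lcComp, Category.assoc, pullback.lift_fst, pullback.lift_snd,
      pullback.lift_fst_assoc, pullback.lift_snd_assoc, ← L.map_comp, ← L.map_comp_assoc]
  · simp only [lcComp, Category.assoc, pullback.lift_fst, pullback.lift_snd,
      pullback.lift_fst_assoc, pullback.lift_snd_assoc, ← L.map_comp_assoc]

/-- Local cartesianness of the localization, as a natural isomorphism
`L (ι X ×_{ι Z} -) ≅ X ×_Z (L -)`. -/
noncomputable def lcNatIso {X Z : D} (f : X ⟶ Z)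
    (lc : ∀ (Y : C) (g : Y ⟶ ι.obj Z),
      IsIso (localizationPullbackComparison L ι adj X Z Y (ι.map f) g)) :
    lcPhi L ι adj f ≅ lcPsi L ι adj f :=
  NatIso.ofComponents
    (fun W =>
      Over.isoMk (@asIso _ _ _ _ _ (lcComp_isIso L ι adj f W (lc _ _)))
        (by exact pullback.lift_snd _ _ _))
    (by
      intro W W' u
      ext
      exact lcComp_natural L ι adj f u)

/-- The counit induces an isomorphism `Over.post ι ⋙ Over.post L ⋙ Over.map (counit Z) ≅ 𝟭`. -/
noncomputable def lcCounitIso (Z : D) :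
    Over.post (X := Z) ι ⋙ Over.post L ⋙ Over.map (adj.counit.app Z) ≅ 𝟭 (Over Z) :=
  NatIso.ofComponents
    (fun Y => Over.isoMk (asIso (adj.counit.app Y.left) :) (adj.counit_naturality Y.hom).symm)
    (by intro Y Y' u; ext; exact adj.counit_naturality u.left)

end Aux

set_option maxHeartbeats 1000000 in
/-- Let `L : C ⥤ D` be a locally cartesian localization, where `C`
has pullbacks and `I`-shaped colimits.  If `I`-shaped colimits are universal in `C`,
then `I`-shaped colimits are universal in `D`. -/
theorem stmt_1 (I : Type*) [Category I]
    [HasPullbacks C] [HasPullbacks D]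
    [HasColimitsOfShape I C] [HasColimitsOfShape I D]
    (L : C ⥤ D) (ι : D ⥤ C) [ι.Full] [ι.Faithful] (adj : L ⊣ ι)
    (lc : ∀ (X Z : D) (Y : C) (f : ι.obj X ⟶ ι.obj Z) (g : Y ⟶ ι.obj Z),
      IsIso (localizationPullbackComparison L ι adj X Z Y f g))
    (univC : ∀ {X Z : C} (f : X ⟶ Z), PreservesColimitsOfShape I (Over.pullback f)) :
    ∀ {X Z : D} (f : X ⟶ Z), PreservesColimitsOfShape I (Over.pullback f) := by
  intro X Z f
  -- `Φ` preserves `I`-shaped colimits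
  haveI hL : PreservesColimitsOfShape I L :=
    adj.leftAdjoint_preservesColimits.preservesColimitsOfShape
  haveI hpostL : ∀ (W : C), PreservesColimitsOfShape I (Over.post (X := W) L) := by
    intro W
    haveI : PreservesColimitsOfShape I (Over.post (X := W) L ⋙ Over.forget (L.obj W)) :=
      inferInstanceAs (PreservesColimitsOfShape I (Over.forget W ⋙ L))
    exact preservesColimitsOfShape_of_reflects_of_preserves _ (Over.forget (L.obj W))
  haveI huniv := univC (ι.map f)
  haveI hmap : PreservesColimitsOfShape I (Over.map (adj.counit.app X)) :=
    (Over.mapPullbackAdj (adj.counit.app X)).leftAdjoint_preservesColimits.preservesColimitsOfShape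
  haveI hPhi : PreservesColimitsOfShape I (lcPhi L ι adj f) := by
    unfold lcPhi; infer_instance
  -- the natural isomorphism `Φ ≅ Ψ`
  let e : lcPhi L ι adj f ≅ lcPsi L ι adj f := lcNatIso L ι adj f (fun Y g => lc X Z Y (ι.map f) g)
  -- `Over.post ι ⋙ Φ` preserves `I`-shaped colimits
  haveI hG : PreservesColimitsOfShape I (Over.post (X := Z) ι ⋙ lcPhi L ι adj f) := by
    constructor; intro K; constructor; intro c hc
    -- a colimit cocone for `K ⋙ Over.post ι` in `Over (ι Z)`
    let c' := colimit.cocone (K ⋙ Over.post (X := Z) ι)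
    let hc' : IsColimit c' := colimit.isColimit _
    -- the canonical comparison from the colimit to `ι` of the colimit
    let t : c'.pt ⟶ (Over.post (X := Z) ι).obj c.pt := hc'.desc ((Over.post ι).mapCocone c)
    have ht : ∀ i, c'.ι.app i ≫ t = (Over.post ι).map (c.ι.app i) := fun i => hc'.fac _ i
    -- `L` applied to the underlying map of `t` is an isomorphism
    let q : Over (ι.obj Z) ⥤ D := Over.forget (ι.obj Z) ⋙ L
    haveI : PreservesColimitsOfShape I q := inferInstance
    let hql : IsColimit (q.mapCocone c') := isColimitOfPreserves q hc'
    have h2 : IsColimit (q.mapCocone ((Over.post ι).mapCocone c)) := by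
      have h2' : IsColimit ((Over.forget Z).mapCocone c) :=
        isColimitOfPreserves (Over.forget Z) hc
      have e2 : Over.forget Z ≅ Over.forget Z ⋙ ι ⋙ L :=
        (Functor.isoWhiskerLeft (Over.forget Z) (asIso adj.counit) ≪≫
          (Over.forget Z).rightUnitor).symm
      exact IsColimit.mapCoconeEquiv e2 h2'
    have hqt : q.map t = (hql.coconePointUniqueUpToIso h2).hom := by
      apply hql.hom_ext
      intro i
      rw [hql.comp_coconePointUniqueUpToIso_hom]
      show q.map (c'.ι.app i) ≫ q.map t = _
      rw [← q.map_comp, ht i]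
      rfl
    have hqtiso : IsIso (q.map t) := by rw [hqt]; infer_instance
    have hpostLt : IsIso ((Over.post L).map t) := by
      haveI : IsIso ((Over.forget (L.obj (ι.obj Z))).map ((Over.post L).map t)) := hqtiso
      exact isIso_of_reflects_iso _ (Over.forget (L.obj (ι.obj Z)))
    have hPsit : IsIso ((lcPsi L ι adj f).map t) := by
      show IsIso ((Over.map (adj.counit.app Z) ⋙ Over.pullback f).map ((Over.post L).map t))
      infer_instance
    have hPhit : IsIso ((lcPhi L ι adj f).map t) := (NatIso.isIso_map_iff e t).mpr hPsit
    -- conclude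
    refine ⟨IsColimit.ofIsoColimit (isColimitOfPreserves (lcPhi L ι adj f) hc')
      (Cocones.ext (@asIso _ _ _ _ _ hPhit) (fun i => ?_))⟩
    show (lcPhi L ι adj f).map (c'.ι.app i) ≫ (lcPhi L ι adj f).map t = _
    rw [← (lcPhi L ι adj f).map_comp, ht i]
    rfl
  -- identify `Over.pullback f` with `Over.post ι ⋙ Φ`
  refine preservesColimitsOfShape_of_natIso (F := Over.post (X := Z) ι ⋙ lcPhi L ι adj f) ?_
  calc Over.post (X := Z) ι ⋙ lcPhi L ι adj f
      ≅ Over.post (X := Z) ι ⋙ lcPsi L ι adj f := Functor.isoWhiskerLeft _ e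
    _ ≅ (Over.post (X := Z) ι ⋙ Over.post L ⋙ Over.map (adj.counit.app Z)) ⋙ Over.pullback f :=
        Iso.refl _
    _ ≅ 𝟭 (Over Z) ⋙ Over.pullback f := Functor.isoWhiskerRight (lcCounitIso L ι adj Z) _
    _ ≅ Over.pullback f := Functor.leftUnitor _
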